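/- Let γ > 0, κ(t) = exp(−γt), and let a1, ..., a6 be real numbers such that a1,...,a6 ≥ 0, a4 + a5 − a6 ≥ 0, a1 + a2 + a3 − a4 − a5 ≥ 0 and (2/3)(2a1 + 2a2 + 2a3 + a4 + a5) ≤ 1. Define the Kraus operators K₀(t) = √(1 − (2/3)(2a1+2a2+2a3+a4+a5)(1 − κ(t)))·I₃, Kᵢ(t) = √(aᵢ(1 − κ(t)))·λᵢ for i = 1,...,6, K₇(t) = √((a4+a5−a6)(1 − κ(t)))·λ7, and K₈(t) = √((a1+a2+a3−a4−a5)(1 − κ(t)))·λ8. Then for every t ≥ 0, Σᵢ₌₀⁸ Kᵢ(t)†Kᵢ(t) = I₃, i.e. the family constitutes a trace-preserving quantum channel on 3-level systems. -/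
import Mathlib


open Matrix Complex

noncomputable section

/-- The Gell-Mann matrices. -/
def gm1 : Matrix (Fin 3) (Fin 3) ℂ := !![0, 1, 0; 1, 0, 0; 0, 0, 0]
def gm2 : Matrix (Fin 3) (Fin 3) ℂ := !![0, -I, 0; I, 0, 0; 0, 0, 0]
def gm3 : Matrix (Fin 3) (Fin 3) ℂ := !![1, 0, 0; 0, -1, 0; 0, 0, 0]
def gm4 : Matrix (Fin 3) (Fin 3) ℂ := !![0, 0, 1; 0, 0, 0; 1, 0, 0]
def gm5 : Matrix (Fin 3) (Fin 3) ℂ := !![0, 0, -I; 0, 0, 0; I, 0, 0]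
def gm6 : Matrix (Fin 3) (Fin 3) ℂ := !![0, 0, 0; 0, 0, 1; 0, 1, 0]
def gm7 : Matrix (Fin 3) (Fin 3) ℂ := !![0, 0, 0; 0, 0, -I; 0, I, 0]
def gm8 : Matrix (Fin 3) (Fin 3) ℂ :=
  ((↑(Real.sqrt 3) : ℂ))⁻¹ • !![1, 0, 0; 0, 1, 0; 0, 0, -2]

/-- The decoherence function `κ(t) = exp(-γ t)`. -/
def kappa (γ t : ℝ) : ℝ := Real.exp (-(γ * t))

/-- The Kraus operators of the six-parametric family for 3-level systems. -/
def K3_0 (γ a1 a2 a3 a4 a5 t : ℝ) : Matrix (Fin 3) (Fin 3) ℂ :=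
  (↑(Real.sqrt (1 - 2 / 3 * (2 * a1 + 2 * a2 + 2 * a3 + a4 + a5) * (1 - kappa γ t))) : ℂ)
    • (1 : Matrix (Fin 3) (Fin 3) ℂ)

def K3 (γ b t : ℝ) (g : Matrix (Fin 3) (Fin 3) ℂ) : Matrix (Fin 3) (Fin 3) ℂ :=
  (↑(Real.sqrt (b * (1 - kappa γ t))) : ℂ) • g

lemma key_smul (x : ℝ) (hx : 0 ≤ x) (A : Matrix (Fin 3) (Fin 3) ℂ) :
    ((↑(Real.sqrt x) : ℂ) • A)ᴴ * ((↑(Real.sqrt x) : ℂ) • A) = (x : ℂ) • (Aᴴ * A) := by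
  rw [conjTranspose_smul, Matrix.smul_mul, Matrix.mul_smul, smul_smul]
  congr 1
  rw [star_def, Complex.conj_ofReal, ← Complex.ofReal_mul, Real.mul_self_sqrt hx]

lemma g1 : gm1ᴴ * gm1 = !![1,0,0;0,1,0;0,0,0] := by
  ext i j; fin_cases i <;> fin_cases j <;>
    simp [gm1, Matrix.mul_apply, Matrix.conjTranspose_apply, Fin.sum_univ_three, Matrix.vecHead, Matrix.vecTail]
lemma g2 : gm2ᴴ * gm2 = !![1,0,0;0,1,0;0,0,0] := by
  ext i j; fin_cases i <;> fin_cases j <;>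
    simp [gm2, Matrix.mul_apply, Matrix.conjTranspose_apply, Fin.sum_univ_three, Matrix.vecHead, Matrix.vecTail]
lemma g3 : gm3ᴴ * gm3 = !![1,0,0;0,1,0;0,0,0] := by
  ext i j; fin_cases i <;> fin_cases j <;>
    simp [gm3, Matrix.mul_apply, Matrix.conjTranspose_apply, Fin.sum_univ_three, Matrix.vecHead, Matrix.vecTail]
lemma g4 : gm4ᴴ * gm4 = !![1,0,0;0,0,0;0,0,1] := by
  ext i j; fin_cases i <;> fin_cases j <;>
    simp [gm4, Matrix.mul_apply, Matrix.conjTranspose_apply, Fin.sum_univ_three, Matrix.vecHead, Matrix.vecTail]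
lemma g5 : gm5ᴴ * gm5 = !![1,0,0;0,0,0;0,0,1] := by
  ext i j; fin_cases i <;> fin_cases j <;>
    simp [gm5, Matrix.mul_apply, Matrix.conjTranspose_apply, Fin.sum_univ_three, Matrix.vecHead, Matrix.vecTail]
lemma g6 : gm6ᴴ * gm6 = !![0,0,0;0,1,0;0,0,1] := by
  ext i j; fin_cases i <;> fin_cases j <;>
    simp [gm6, Matrix.mul_apply, Matrix.conjTranspose_apply, Fin.sum_univ_three, Matrix.vecHead, Matrix.vecTail]
lemma g7 : gm7ᴴ * gm7 = !![0,0,0;0,1,0;0,0,1] := by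
  ext i j; fin_cases i <;> fin_cases j <;>
    simp [gm7, Matrix.mul_apply, Matrix.conjTranspose_apply, Fin.sum_univ_three, Matrix.vecHead, Matrix.vecTail]
lemma g8 : gm8ᴴ * gm8 = (3 : ℂ)⁻¹ • !![1,0,0;0,1,0;0,0,4] := by
  have h3 : ((↑(Real.sqrt 3) : ℂ))⁻¹ * ((↑(Real.sqrt 3) : ℂ))⁻¹ = (3 : ℂ)⁻¹ := by
    rw [← mul_inv, ← Complex.ofReal_mul, Real.mul_self_sqrt (by norm_num)]
    norm_num
  ext i j; fin_cases i <;> fin_cases j <;>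
    simp [gm8, Matrix.mul_apply, Matrix.conjTranspose_apply, Fin.sum_univ_three, Matrix.vecHead, Matrix.vecTail,
      Complex.conj_ofReal, h3] <;> ring_nf <;> simp [sq, h3, map_ofNat] <;> norm_num

/-- the six-parametric family of Kraus operators for 3-level systems
constitutes a trace-preserving quantum channel: `∑ᵢ₌₀⁸ Kᵢ(t)† Kᵢ(t) = I₃` for `t ≥ 0`. -/
theorem kraus_family_trace_preserving_qutrit (γ a1 a2 a3 a4 a5 a6 : ℝ) (hγ : 0 < γ)
    (h1 : 0 ≤ a1) (h2 : 0 ≤ a2) (h3 : 0 ≤ a3) (h4 : 0 ≤ a4) (h5 : 0 ≤ a5) (h6 : 0 ≤ a6)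
    (h7 : 0 ≤ a4 + a5 - a6) (h8 : 0 ≤ a1 + a2 + a3 - a4 - a5)
    (hsum : 2 / 3 * (2 * a1 + 2 * a2 + 2 * a3 + a4 + a5) ≤ 1) :
    ∀ t : ℝ, 0 ≤ t →
      (K3_0 γ a1 a2 a3 a4 a5 t)ᴴ * K3_0 γ a1 a2 a3 a4 a5 t
        + (K3 γ a1 t gm1)ᴴ * K3 γ a1 t gm1
        + (K3 γ a2 t gm2)ᴴ * K3 γ a2 t gm2
        + (K3 γ a3 t gm3)ᴴ * K3 γ a3 t gm3
        + (K3 γ a4 t gm4)ᴴ * K3 γ a4 t gm4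
        + (K3 γ a5 t gm5)ᴴ * K3 γ a5 t gm5
        + (K3 γ a6 t gm6)ᴴ * K3 γ a6 t gm6
        + (K3 γ (a4 + a5 - a6) t gm7)ᴴ * K3 γ (a4 + a5 - a6) t gm7
        + (K3 γ (a1 + a2 + a3 - a4 - a5) t gm8)ᴴ * K3 γ (a1 + a2 + a3 - a4 - a5) t gm8
      = 1 := by
  intro t ht
  have hκ0 : 0 < kappa γ t := Real.exp_pos _
  have hκ1 : kappa γ t ≤ 1 := Real.exp_le_one_iff.mpr (by nlinarith)
  have hc0 : 0 ≤ 1 - kappa γ t := by linarith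
  have hc1 : 1 - kappa γ t ≤ 1 := by linarith
  have hS : 0 ≤ 2 / 3 * (2 * a1 + 2 * a2 + 2 * a3 + a4 + a5) := by linarith
  have hx0 : 0 ≤ 1 - 2 / 3 * (2 * a1 + 2 * a2 + 2 * a3 + a4 + a5) * (1 - kappa γ t) := by
    nlinarith
  unfold K3_0 K3
  rw [key_smul _ hx0, key_smul _ (mul_nonneg h1 hc0), key_smul _ (mul_nonneg h2 hc0),
    key_smul _ (mul_nonneg h3 hc0), key_smul _ (mul_nonneg h4 hc0),
    key_smul _ (mul_nonneg h5 hc0), key_smul _ (mul_nonneg h6 hc0),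
    key_smul _ (mul_nonneg h7 hc0), key_smul _ (mul_nonneg h8 hc0),
    g1, g2, g3, g4, g5, g6, g7, g8]
  have hone : (1 : Matrix (Fin 3) (Fin 3) ℂ)ᴴ * 1 = 1 := by simp
  rw [hone]
  ext i j
  fin_cases i <;> fin_cases j <;>
    simp [Matrix.one_apply, Matrix.vecHead, Matrix.vecTail, Complex.ext_iff] <;>
    first
      | (push_cast; constructor <;> ring)
      | (push_cast; ring)


end
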